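/- (Cotangent recursion for area-preserving linear maps) Let M be a 2×2 real matrix with det M = ±1 and ‖M‖ ≤ A. Let v^s be a unit vector, set λ^s = log ‖M v^s‖, and let v^u be any unit vector. Then |cot ∠(M v^u, M v^s)| ≤ e^{2λ^s} |cot ∠(v^u, v^s)| + A². -/

import Mathlib

open InnerProductGeometry

open RealInnerProductSpace in
private lemma inner_two (u w : EuclideanSpace ℝ (Fin 2)) :
    ⟪u, w⟫ = u 0 * w 0 + u 1 * w 1 := by
  simp [PiLp.inner_apply, Fin.sum_univ_two, RCLike.inner_apply]; ring

private def cr (u w : EuclideanSpace ℝ (Fin 2)) : ℝ := u 0 * w 1 - u 1 * w 0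

private lemma sin_mul (u w : EuclideanSpace ℝ (Fin 2)) :
    Real.sin (angle u w) * (‖u‖ * ‖w‖) = |cr u w| := by
  rw [sin_angle_mul_norm_mul_norm]
  have h : (inner ℝ u u : ℝ) * inner ℝ w w - inner ℝ u w * inner ℝ u w = cr u w ^ 2 := by
    simp only [inner_two, cr]; ring
  rw [h, Real.sqrt_sq_eq_abs]

private lemma decomp (x : EuclideanSpace ℝ (Fin 2)) :
    x = x 0 • (EuclideanSpace.single 0 1 : EuclideanSpace ℝ (Fin 2))
      + x 1 • (EuclideanSpace.single 1 1 : EuclideanSpace ℝ (Fin 2)) := by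
  ext i
  fin_cases i <;> simp [EuclideanSpace.single_apply]

private lemma cr_map (M : EuclideanSpace ℝ (Fin 2) →L[ℝ] EuclideanSpace ℝ (Fin 2))
    (u w : EuclideanSpace ℝ (Fin 2)) :
    cr (M u) (M w) =
      LinearMap.det (M : EuclideanSpace ℝ (Fin 2) →ₗ[ℝ] EuclideanSpace ℝ (Fin 2)) * cr u w := by
  set e0 : EuclideanSpace ℝ (Fin 2) := EuclideanSpace.single 0 1 with he0
  set e1 : EuclideanSpace ℝ (Fin 2) := EuclideanSpace.single 1 1 with he1
  have hdet : LinearMap.det (M : EuclideanSpace ℝ (Fin 2) →ₗ[ℝ] EuclideanSpace ℝ (Fin 2))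
      = cr (M e0) (M e1) := by
    rw [← LinearMap.det_toMatrix (EuclideanSpace.basisFun (Fin 2) ℝ).toBasis,
      Matrix.det_fin_two]
    simp only [LinearMap.toMatrix_apply, OrthonormalBasis.coe_toBasis_repr_apply,
      OrthonormalBasis.coe_toBasis, EuclideanSpace.basisFun_repr, EuclideanSpace.basisFun_apply,
      ContinuousLinearMap.coe_coe, cr]
    rw [he0, he1]
    ring
  have hMx : ∀ x : EuclideanSpace ℝ (Fin 2), M x = x 0 • M e0 + x 1 • M e1 := by
    intro x
    conv_lhs => rw [decomp x]
    simp
    rfl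
  rw [hMx u, hMx w, hdet]
  simp only [cr, PiLp.add_apply, PiLp.smul_apply, smul_eq_mul]
  ring

/-- Cotangent recursion for area-preserving linear maps of the plane. -/
theorem stmt_14 (M : EuclideanSpace ℝ (Fin 2) →L[ℝ] EuclideanSpace ℝ (Fin 2))
    (A : ℝ) (hdet : |LinearMap.det (M : EuclideanSpace ℝ (Fin 2) →ₗ[ℝ] EuclideanSpace ℝ (Fin 2))| = 1)
    (hA : ‖M‖ ≤ A)
    (vs vu : EuclideanSpace ℝ (Fin 2)) (hvs : ‖vs‖ = 1) (hvu : ‖vu‖ = 1)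
    (lams : ℝ) (hlams : lams = Real.log ‖M vs‖)
    (hangle : angle vu vs ∈ Set.Ioo 0 Real.pi) :
    |Real.cos (angle (M vu) (M vs)) / Real.sin (angle (M vu) (M vs))| ≤
      Real.exp (2 * lams) * |Real.cos (angle vu vs) / Real.sin (angle vu vs)| + A ^ 2 := by
  obtain ⟨hθ0, hθπ⟩ := hangle
  set θ := angle vu vs with hθ
  have hs : 0 < Real.sin θ := Real.sin_pos_of_pos_of_lt_pi hθ0 hθπ
  have hdet0 : LinearMap.det (M : EuclideanSpace ℝ (Fin 2) →ₗ[ℝ] EuclideanSpace ℝ (Fin 2)) ≠ 0 := by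
    intro h; rw [h] at hdet; norm_num at hdet
  have hinj : Function.Injective M := by
    intro x y hxy
    exact (LinearMap.equivOfDetNeZero _ hdet0).injective hxy
  have hMvs : M vs ≠ 0 := fun h => by
    have : vs = 0 := hinj (by simpa using h)
    rw [this] at hvs; simp at hvs
  have hMvu : M vu ≠ 0 := fun h => by
    have : vu = 0 := hinj (by simpa using h)
    rw [this] at hvu; simp at hvu
  have hn2 : 0 < ‖M vs‖ := norm_pos_iff.mpr hMvs
  have hn1 : 0 < ‖M vu‖ := norm_pos_iff.mpr hMvu
  -- cos θ equals the inner ℝ product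
  have hcos : Real.cos θ = (inner ℝ vu vs : ℝ) := by
    have := cos_angle_mul_norm_mul_norm vu vs
    rw [hvu, hvs, mul_one, mul_one] at this; rw [hθ]; exact this
  -- cross product of vu vs has absolute value sin θ
  have hcr : |cr vu vs| = Real.sin θ := by
    have := sin_mul vu vs
    rw [hvu, hvs] at this; simpa using this.symm
  -- cross product of images
  have hcrI : |cr (M vu) (M vs)| = Real.sin θ := by
    rw [cr_map, abs_mul, hdet, one_mul, hcr]
  -- sine of image angle
  have hsinI : Real.sin (angle (M vu) (M vs)) * (‖M vu‖ * ‖M vs‖) = Real.sin θ := by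
    rw [sin_angle_mul_norm_mul_norm]
    have h : (inner ℝ (M vu) (M vu) : ℝ) * inner ℝ (M vs) (M vs)
        - inner ℝ (M vu) (M vs) * inner ℝ (M vu) (M vs) = cr (M vu) (M vs) ^ 2 := by
      simp only [inner_two, cr]; ring
    rw [h, Real.sqrt_sq_eq_abs, hcrI]
  have hcosI : Real.cos (angle (M vu) (M vs)) * (‖M vu‖ * ‖M vs‖) = (inner ℝ (M vu) (M vs) : ℝ) :=
    cos_angle_mul_norm_mul_norm _ _
  have hnn : (0 : ℝ) < ‖M vu‖ * ‖M vs‖ := mul_pos hn1 hn2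
  have hratio : Real.cos (angle (M vu) (M vs)) / Real.sin (angle (M vu) (M vs))
      = (inner ℝ (M vu) (M vs) : ℝ) / Real.sin θ := by
    rw [← hcosI, ← hsinI]
    rw [mul_div_mul_right _ _ (ne_of_gt hnn)]
  -- decomposition of vu
  set w : EuclideanSpace ℝ (Fin 2) := vu - Real.cos θ • vs with hw
  have hvu_eq : vu = Real.cos θ • vs + w := by rw [hw]; abel
  have hnw : ‖w‖ = Real.sin θ := by
    have hsq : ‖w‖ ^ 2 = Real.sin θ ^ 2 := by
      rw [hw]
      rw [norm_sub_sq_real]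
      rw [real_inner_smul_right, norm_smul]
      have h1 : (inner ℝ vu vs : ℝ) = Real.cos θ := hcos.symm
      rw [h1, hvu, hvs]
      simp [Real.norm_eq_abs, mul_pow, sq_abs]
      nlinarith [Real.sin_sq_add_cos_sq θ]
    rw [← Real.sqrt_sq (norm_nonneg w), hsq, Real.sqrt_sq hs.le]
  have hinner_img : (inner ℝ (M vu) (M vs) : ℝ)
      = Real.cos θ * ‖M vs‖ ^ 2 + (inner ℝ (M w) (M vs) : ℝ) := by
    rw [hvu_eq]
    rw [map_add, map_smul, inner_add_left, real_inner_smul_left,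
      real_inner_self_eq_norm_sq]
  have hMw : |(inner ℝ (M w) (M vs) : ℝ)| ≤ ‖M‖ ^ 2 * Real.sin θ := by
    calc |(inner ℝ (M w) (M vs) : ℝ)| ≤ ‖M w‖ * ‖M vs‖ := abs_real_inner_le_norm _ _
      _ ≤ (‖M‖ * ‖w‖) * (‖M‖ * ‖vs‖) := by
          apply mul_le_mul (M.le_opNorm w) (M.le_opNorm vs) (norm_nonneg _)
            (by positivity)
      _ = ‖M‖ ^ 2 * Real.sin θ := by rw [hnw, hvs]; ring
  have hexp : Real.exp (2 * lams) = ‖M vs‖ ^ 2 := by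
    rw [hlams, show (2:ℝ) * Real.log ‖M vs‖ = Real.log (‖M vs‖ ^ 2) by
      rw [Real.log_pow]; push_cast; ring, Real.exp_log (by positivity)]
  have hM2A2 : ‖M‖ ^ 2 ≤ A ^ 2 := by nlinarith [norm_nonneg M]
  rw [hratio, abs_div, abs_of_pos hs, hinner_img,
    show |Real.cos θ / Real.sin θ| = |Real.cos θ| / Real.sin θ by rw [abs_div, abs_of_pos hs]]
  have key : |Real.cos θ * ‖M vs‖ ^ 2 + (inner ℝ (M w) (M vs) : ℝ)| / Real.sin θ
      ≤ ‖M vs‖ ^ 2 * (|Real.cos θ| / Real.sin θ) + ‖M‖ ^ 2 := by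
    rw [div_le_iff₀ hs]
    calc |Real.cos θ * ‖M vs‖ ^ 2 + (inner ℝ (M w) (M vs) : ℝ)|
        ≤ |Real.cos θ| * ‖M vs‖ ^ 2 + |(inner ℝ (M w) (M vs) : ℝ)| := by
          refine (abs_add_le _ _).trans ?_
          rw [abs_mul, abs_of_nonneg (by positivity : (0:ℝ) ≤ ‖M vs‖ ^ 2)]
      _ ≤ |Real.cos θ| * ‖M vs‖ ^ 2 + ‖M‖ ^ 2 * Real.sin θ := by linarith
      _ = (‖M vs‖ ^ 2 * (|Real.cos θ| / Real.sin θ) + ‖M‖ ^ 2) * Real.sin θ := by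
          field_simp
  calc |Real.cos θ * ‖M vs‖ ^ 2 + (inner ℝ (M w) (M vs) : ℝ)| / Real.sin θ
      ≤ ‖M vs‖ ^ 2 * (|Real.cos θ| / Real.sin θ) + ‖M‖ ^ 2 := key
    _ ≤ Real.exp (2 * lams) * (|Real.cos θ| / Real.sin θ) + A ^ 2 := by
        rw [hexp]
        have : (0:ℝ) ≤ |Real.cos θ| / Real.sin θ := by positivity
        linarith
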